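/- Define the second-order differential operator Δ_g acting on smooth functions F : ℝ^5 → ℝ of the coordinates (a, b, p, q, r) by Δ_g F := (1/24)(∂²F/∂a² + ∂²F/∂b² − ∂²F/∂a∂b + 3·∂F/∂a) + (1/8)·e^{2b−2a}·(p²·∂²F/∂q² + ∂²F/∂r² + 2p·∂²F/∂r∂q + e^{−2a−4b}·∂²F/∂q² + e^{−6b}·∂²F/∂p²). Let K : (0,∞) × ℝ → ℝ be twice continuously differentiable and harmonic, i.e., ∂²K/∂u² + ∂²K/∂q² = 0, and set u(a,b,p) := √(p²·e^{2(b−a)} + e^{−2(2a+b)}). Then the function F(a,b,p,q,r) := (1/u(a,b,p))·e^{−2a}·K(u(a,b,p), q) satisfies Δ_g F = −F/12. -/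

import Mathlib

/-- Partial derivative of a function on `ℝ⁵` along the `i`-th coordinate direction. -/
noncomputable def pd5 (i : Fin 5) (F : (Fin 5 → ℝ) → ℝ) : (Fin 5 → ℝ) → ℝ :=
  fun v => deriv (fun t : ℝ => F (Function.update v i t)) (v i)

/-- The Laplace–Beltrami operator of the `SL(3,ℝ)`-invariant Einstein metric on the
space of conics, in the coordinates `(a, b, p, q, r) = (v 0, v 1, v 2, v 3, v 4)`:
`Δ_g F = (1/24)(F_aa + F_bb − F_ab + 3F_a)
  + (1/8)·e^{2b−2a}·(p²F_qq + F_rr + 2pF_rq + e^{−2a−4b}F_qq + e^{−6b}F_pp)`. -/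
noncomputable def laplaceG (F : (Fin 5 → ℝ) → ℝ) : (Fin 5 → ℝ) → ℝ := fun v =>
  (1 / 24) * (pd5 0 (pd5 0 F) v + pd5 1 (pd5 1 F) v - pd5 0 (pd5 1 F) v + 3 * pd5 0 F v)
    + (1 / 8) * Real.exp (2 * v 1 - 2 * v 0) *
        ((v 2) ^ 2 * pd5 3 (pd5 3 F) v + pd5 4 (pd5 4 F) v + 2 * v 2 * pd5 4 (pd5 3 F) v
          + Real.exp (-2 * v 0 - 4 * v 1) * pd5 3 (pd5 3 F) v
          + Real.exp (-6 * v 1) * pd5 2 (pd5 2 F) v)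

namespace HEaux
open Real Set

variable (K : ℝ → ℝ → ℝ)

noncomputable def P1 (x : ℝ × ℝ) : ℝ := fderiv ℝ (Function.uncurry K) x (1, 0)
noncomputable def P2 (x : ℝ × ℝ) : ℝ := fderiv ℝ (Function.uncurry K) x (0, 1)
noncomputable def P11 (x : ℝ × ℝ) : ℝ := fderiv ℝ (P1 K) x (1, 0)
noncomputable def P22 (x : ℝ × ℝ) : ℝ := fderiv ℝ (P2 K) x (0, 1)

variable {K}
variable (hK : ContDiffOn ℝ 2 (Function.uncurry K) (Set.Ioi (0 : ℝ) ×ˢ (Set.univ : Set ℝ)))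

lemma isOpenS : IsOpen (Set.Ioi (0 : ℝ) ×ˢ (Set.univ : Set ℝ)) := isOpen_Ioi.prod isOpen_univ

lemma memS {u q : ℝ} (hu : 0 < u) : (u, q) ∈ (Set.Ioi (0 : ℝ) ×ˢ (Set.univ : Set ℝ)) :=
  ⟨hu, trivial⟩

include hK in
lemma diffW {u q : ℝ} (hu : 0 < u) :
    DifferentiableAt ℝ (Function.uncurry K) (u, q) :=
  ((hK.contDiffAt ((isOpenS).mem_nhds (memS hu))).differentiableAt (by norm_num))

include hK in
lemma contDiffOn_fderivW :
    ContDiffOn ℝ 1 (fun x => fderiv ℝ (Function.uncurry K) x)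
      (Set.Ioi (0 : ℝ) ×ˢ (Set.univ : Set ℝ)) :=
  hK.fderiv_of_isOpen isOpenS (by norm_num)

include hK in
lemma diffP1 {u q : ℝ} (hu : 0 < u) : DifferentiableAt ℝ (P1 K) (u, q) := by
  have h : ContDiffOn ℝ 1 (P1 K) (Set.Ioi (0 : ℝ) ×ˢ (Set.univ : Set ℝ)) :=
    (contDiffOn_fderivW hK).clm_apply contDiffOn_const
  exact (h.contDiffAt ((isOpenS).mem_nhds (memS hu))).differentiableAt one_ne_zero

include hK in
lemma diffP2 {u q : ℝ} (hu : 0 < u) : DifferentiableAt ℝ (P2 K) (u, q) := by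
  have h : ContDiffOn ℝ 1 (P2 K) (Set.Ioi (0 : ℝ) ×ˢ (Set.univ : Set ℝ)) :=
    (contDiffOn_fderivW hK).clm_apply contDiffOn_const
  exact (h.contDiffAt ((isOpenS).mem_nhds (memS hu))).differentiableAt one_ne_zero

include hK in
/-- Chain rule for `K` in the first variable along a curve. -/
lemma hasDerivAt_K_fst {m : ℝ → ℝ} {m' t : ℝ} (q : ℝ) (hm : HasDerivAt m m' t)
    (hpos : 0 < m t) :
    HasDerivAt (fun s => K (m s) q) (P1 K (m t, q) * m') t := by
  have hγ : HasDerivAt (fun s => ((m s, q) : ℝ × ℝ)) (m', 0) t :=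
    hm.prodMk (hasDerivAt_const _ _)
  have hW := (diffW hK (q := q) hpos).hasFDerivAt
  have h := hW.comp_hasDerivAt t hγ
  have : fderiv ℝ (Function.uncurry K) (m t, q) (m', 0) = P1 K (m t, q) * m' := by
    have : ((m', 0) : ℝ × ℝ) = m' • (1, 0) := by simp [Prod.smul_mk]
    rw [this, map_smul, P1]
    simp [smul_eq_mul]; ring
  rw [this] at h
  exact h


include hK in
lemma hasDerivAt_P1_fst {m : ℝ → ℝ} {m' t : ℝ} (q : ℝ) (hm : HasDerivAt m m' t)
    (hpos : 0 < m t) :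
    HasDerivAt (fun s => P1 K (m s, q)) (P11 K (m t, q) * m') t := by
  have hγ : HasDerivAt (fun s => ((m s, q) : ℝ × ℝ)) (m', 0) t :=
    hm.prodMk (hasDerivAt_const _ _)
  have hW := (diffP1 hK (q := q) hpos).hasFDerivAt
  have h := hW.comp_hasDerivAt t hγ
  have : fderiv ℝ (P1 K) (m t, q) (m', 0) = P11 K (m t, q) * m' := by
    have h2 : ((m', 0) : ℝ × ℝ) = m' • (1, 0) := by simp [Prod.smul_mk]
    rw [h2, map_smul, P11]
    simp [smul_eq_mul]; ring
  rw [this] at h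
  exact h

include hK in
lemma hasDerivAt_K_snd {u t : ℝ} (hu : 0 < u) :
    HasDerivAt (fun s => K u s) (P2 K (u, t)) t := by
  have hγ : HasDerivAt (fun s => ((u, s) : ℝ × ℝ)) (0, 1) t :=
    (hasDerivAt_const _ _).prodMk (hasDerivAt_id _)
  have h := (diffW hK (q := t) hu).hasFDerivAt.comp_hasDerivAt t hγ
  exact h

include hK in
lemma hasDerivAt_P2_snd {u t : ℝ} (hu : 0 < u) :
    HasDerivAt (fun s => P2 K (u, s)) (P22 K (u, t)) t := by
  have hγ : HasDerivAt (fun s => ((u, s) : ℝ × ℝ)) (0, 1) t :=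
    (hasDerivAt_const _ _).prodMk (hasDerivAt_id _)
  have h := (diffP2 hK (q := t) hu).hasFDerivAt.comp_hasDerivAt t hγ
  exact h

include hK in
lemma iteratedDeriv_fst {u q : ℝ} (hu : 0 < u) :
    iteratedDeriv 2 (fun u' => K u' q) u = P11 K (u, q) := by
  rw [show (2:ℕ) = 1 + 1 from rfl, iteratedDeriv_succ, iteratedDeriv_one]
  have hev : deriv (fun u' => K u' q) =ᶠ[nhds u] fun u' => P1 K (u', q) := by
    filter_upwards [isOpen_Ioi.mem_nhds hu] with x hx
    exact ((hasDerivAt_K_fst hK q (hasDerivAt_id x) hx).congr_deriv (by simp)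
      |>.congr_of_eventuallyEq (by filter_upwards with s; rfl)).deriv
  rw [hev.deriv_eq]
  have := (hasDerivAt_P1_fst hK q (hasDerivAt_id u) hu)
  simpa using this.deriv

include hK in
lemma iteratedDeriv_snd {u q : ℝ} (hu : 0 < u) :
    iteratedDeriv 2 (fun q' => K u q') q = P22 K (u, q) := by
  rw [show (2:ℕ) = 1 + 1 from rfl, iteratedDeriv_succ, iteratedDeriv_one]
  have hev : deriv (fun q' => K u q') = fun q' => P2 K (u, q') := by
    funext x
    exact (hasDerivAt_K_snd hK hu).deriv
  rw [hev]
  exact (hasDerivAt_P2_snd hK hu).deriv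


variable (K) in
noncomputable def g (u q : ℝ) : ℝ := K u q / u
variable (K) in
noncomputable def g1 (u q : ℝ) : ℝ := P1 K (u, q) / u - K u q / u ^ 2
variable (K) in
noncomputable def g11 (u q : ℝ) : ℝ :=
  P11 K (u, q) / u - 2 * P1 K (u, q) / u ^ 2 + 2 * K u q / u ^ 3
variable (K) in
noncomputable def g2 (u q : ℝ) : ℝ := P2 K (u, q) / u
variable (K) in
noncomputable def g22 (u q : ℝ) : ℝ := P22 K (u, q) / u

include hK in
lemma hasDerivAt_g_fst {m : ℝ → ℝ} {m' t : ℝ} (q : ℝ) (hm : HasDerivAt m m' t)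
    (hpos : 0 < m t) :
    HasDerivAt (fun s => g K (m s) q) (g1 K (m t) q * m') t := by
  have h := (hasDerivAt_K_fst hK q hm hpos).div hm (ne_of_gt hpos)
  refine h.congr_deriv ?_
  unfold g1
  field_simp

include hK in
lemma hasDerivAt_g1_fst {m : ℝ → ℝ} {m' t : ℝ} (q : ℝ) (hm : HasDerivAt m m' t)
    (hpos : 0 < m t) :
    HasDerivAt (fun s => g1 K (m s) q) (g11 K (m t) q * m') t := by
  have h1 := (hasDerivAt_P1_fst hK q hm hpos).div hm (ne_of_gt hpos)
  have h2 := (hasDerivAt_K_fst hK q hm hpos).div (hm.pow 2)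
      (pow_ne_zero 2 (ne_of_gt hpos))
  have h := h1.sub h2
  refine h.congr_deriv ?_
  unfold g11
  simp only [Pi.pow_apply]
  have hne := ne_of_gt hpos
  field_simp
  ring

include hK in
lemma hasDerivAt_g_snd {u t : ℝ} (hu : 0 < u) :
    HasDerivAt (fun s => g K u s) (g2 K u t) t :=
  (hasDerivAt_K_snd hK hu).div_const u

include hK in
lemma hasDerivAt_g2_snd {u t : ℝ} (hu : 0 < u) :
    HasDerivAt (fun s => g2 K u s) (g22 K u t) t :=
  (hasDerivAt_P2_snd hK hu).div_const u

include hK in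
lemma g_harm
    (hharm : ∀ u ∈ Set.Ioi (0 : ℝ), ∀ q : ℝ,
      iteratedDeriv 2 (fun u' => K u' q) u + iteratedDeriv 2 (fun q' => K u q') q = 0)
    {u : ℝ} (hu : 0 < u) (q : ℝ) :
    g22 K u q = -g11 K u q - 2 * g1 K u q / u := by
  have hP : P11 K (u, q) + P22 K (u, q) = 0 := by
    rw [← iteratedDeriv_fst hK hu, ← iteratedDeriv_snd hK hu]
    exact hharm u hu q
  have hne := ne_of_gt hu
  unfold g22 g11 g1
  field_simp
  linear_combination u ^ 2 * hP

/-! ### Geometry of the coordinates -/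

noncomputable def Af (v : Fin 5 → ℝ) : ℝ := Real.exp (2 * (v 1 - v 0))
noncomputable def Bf (v : Fin 5 → ℝ) : ℝ := Real.exp (-2 * (2 * v 0 + v 1))
noncomputable def Uf (v : Fin 5 → ℝ) : ℝ :=
  Real.sqrt ((v 2) ^ 2 * Real.exp (2 * (v 1 - v 0)) + Real.exp (-2 * (2 * v 0 + v 1)))

lemma sf_pos (v : Fin 5 → ℝ) :
    0 < (v 2) ^ 2 * Real.exp (2 * (v 1 - v 0)) + Real.exp (-2 * (2 * v 0 + v 1)) := by
  positivity

lemma Uf_pos (v : Fin 5 → ℝ) : 0 < Uf v := Real.sqrt_pos.2 (sf_pos v)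

lemma Uf_sq (v : Fin 5 → ℝ) : Uf v ^ 2 = (v 2) ^ 2 * Af v + Bf v :=
  Real.sq_sqrt (sf_pos v).le

lemma hasDerivAt_U0 (v : Fin 5 → ℝ) :
    HasDerivAt (fun t => Uf (Function.update v 0 t)) (-(Uf v ^ 2 + Bf v) / Uf v) (v 0) := by
  have hfun : (fun t => Uf (Function.update v 0 t)) =
      fun t => Real.sqrt ((v 2) ^ 2 * Real.exp (2 * (v 1 - t)) + Real.exp (-2 * (2 * t + v 1))) := by
    funext t; simp [Uf]
  rw [hfun]
  have h1 : HasDerivAt (fun t : ℝ => 2 * (v 1 - t)) (-2) (v 0) := by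
    simpa using (((hasDerivAt_id (v 0)).const_sub (v 1)).const_mul 2)
  have h2 : HasDerivAt (fun t : ℝ => -2 * (2 * t + v 1)) (-4) (v 0) := by
    have h := (((hasDerivAt_id (v 0)).const_mul 2).add_const (v 1)).const_mul (-2)
    exact h.congr_deriv (by norm_num)
  have hn : HasDerivAt
      (fun t => (v 2) ^ 2 * Real.exp (2 * (v 1 - t)) + Real.exp (-2 * (2 * t + v 1)))
      ((v 2) ^ 2 * (Real.exp (2 * (v 1 - v 0)) * (-2)) + Real.exp (-2 * (2 * v 0 + v 1)) * (-4))
      (v 0) := ((h1.exp.const_mul ((v 2) ^ 2)).add h2.exp)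
  have h := hn.sqrt (ne_of_gt (sf_pos v))
  convert h using 1
  have hU2 := Uf_sq v
  have hne := ne_of_gt (Uf_pos v)
  rw [show Real.sqrt ((v 2) ^ 2 * Real.exp (2 * (v 1 - v 0)) + Real.exp (-2 * (2 * v 0 + v 1)))
      = Uf v from rfl]
  simp only [Af, Bf] at hU2 ⊢
  set X := Real.exp (2 * (v 1 - v 0)) with hX
  set Y := Real.exp (-2 * (2 * v 0 + v 1)) with hY
  field_simp
  linear_combination (-2) * hU2


lemma hasDerivAt_U1 (v : Fin 5 → ℝ) :
    HasDerivAt (fun t => Uf (Function.update v 1 t)) ((Uf v ^ 2 - 2 * Bf v) / Uf v) (v 1) := by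
  have hfun : (fun t => Uf (Function.update v 1 t)) =
      fun t => Real.sqrt ((v 2) ^ 2 * Real.exp (2 * (t - v 0)) + Real.exp (-2 * (2 * v 0 + t))) := by
    funext t; simp [Uf]
  rw [hfun]
  have h1 : HasDerivAt (fun t : ℝ => 2 * (t - v 0)) 2 (v 1) := by
    simpa using (((hasDerivAt_id (v 1)).sub_const (v 0)).const_mul 2)
  have h2 : HasDerivAt (fun t : ℝ => -2 * (2 * v 0 + t)) (-2) (v 1) := by
    have h := (((hasDerivAt_id (v 1)).const_add (2 * v 0))).const_mul (-2)
    exact h.congr_deriv (by norm_num)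
  have hn : HasDerivAt
      (fun t => (v 2) ^ 2 * Real.exp (2 * (t - v 0)) + Real.exp (-2 * (2 * v 0 + t)))
      ((v 2) ^ 2 * (Real.exp (2 * (v 1 - v 0)) * 2) + Real.exp (-2 * (2 * v 0 + v 1)) * (-2))
      (v 1) := ((h1.exp.const_mul ((v 2) ^ 2)).add h2.exp)
  have h := hn.sqrt (ne_of_gt (sf_pos v))
  convert h using 1
  have hU2 := Uf_sq v
  have hne := ne_of_gt (Uf_pos v)
  rw [show Real.sqrt ((v 2) ^ 2 * Real.exp (2 * (v 1 - v 0)) + Real.exp (-2 * (2 * v 0 + v 1)))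
      = Uf v from rfl]
  simp only [Af, Bf] at hU2 ⊢
  set X := Real.exp (2 * (v 1 - v 0)) with hX
  set Y := Real.exp (-2 * (2 * v 0 + v 1)) with hY
  field_simp
  linear_combination hU2

lemma hasDerivAt_U2 (v : Fin 5 → ℝ) :
    HasDerivAt (fun t => Uf (Function.update v 2 t)) (v 2 * Af v / Uf v) (v 2) := by
  have hfun : (fun t => Uf (Function.update v 2 t)) =
      fun t => Real.sqrt (t ^ 2 * Real.exp (2 * (v 1 - v 0)) + Real.exp (-2 * (2 * v 0 + v 1))) := by
    funext t; simp [Uf]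
  rw [hfun]
  have hn : HasDerivAt
      (fun t => t ^ 2 * Real.exp (2 * (v 1 - v 0)) + Real.exp (-2 * (2 * v 0 + v 1)))
      (2 * v 2 ^ 1 * 1 * Real.exp (2 * (v 1 - v 0)) + 0) (v 2) :=
    (((hasDerivAt_id (v 2)).pow 2).mul_const _).add (hasDerivAt_const _ _)
  have h := hn.sqrt (ne_of_gt (sf_pos v))
  convert h using 1
  have hne := ne_of_gt (Uf_pos v)
  rw [show Real.sqrt ((v 2) ^ 2 * Real.exp (2 * (v 1 - v 0)) + Real.exp (-2 * (2 * v 0 + v 1)))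
      = Uf v from rfl]
  simp only [Af]
  field_simp
  ring

lemma hasDerivAt_B0 (v : Fin 5 → ℝ) :
    HasDerivAt (fun t => Bf (Function.update v 0 t)) (-4 * Bf v) (v 0) := by
  have hfun : (fun t => Bf (Function.update v 0 t)) =
      fun t => Real.exp (-2 * (2 * t + v 1)) := by
    funext t; simp [Bf]
  rw [hfun]
  have h2 : HasDerivAt (fun t : ℝ => -2 * (2 * t + v 1)) (-4) (v 0) := by
    have h := (((hasDerivAt_id (v 0)).const_mul 2).add_const (v 1)).const_mul (-2)
    exact h.congr_deriv (by norm_num)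
  have h := h2.exp
  convert h using 1
  simp only [Bf]
  ring

lemma hasDerivAt_B1 (v : Fin 5 → ℝ) :
    HasDerivAt (fun t => Bf (Function.update v 1 t)) (-2 * Bf v) (v 1) := by
  have hfun : (fun t => Bf (Function.update v 1 t)) =
      fun t => Real.exp (-2 * (2 * v 0 + t)) := by
    funext t; simp [Bf]
  rw [hfun]
  have h2 : HasDerivAt (fun t : ℝ => -2 * (2 * v 0 + t)) (-2) (v 1) := by
    have h := (((hasDerivAt_id (v 1)).const_add (2 * v 0))).const_mul (-2)
    exact h.congr_deriv (by norm_num)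
  have h := h2.exp
  convert h using 1
  simp only [Bf]
  ring

lemma Uf_update3 (v : Fin 5 → ℝ) (t : ℝ) : Uf (Function.update v 3 t) = Uf v := by
  simp [Uf]

lemma Uf_update4 (v : Fin 5 → ℝ) (t : ℝ) : Uf (Function.update v 4 t) = Uf v := by
  simp [Uf]

lemma Af_update2 (v : Fin 5 → ℝ) (t : ℝ) : Af (Function.update v 2 t) = Af v := by
  simp [Af]


/-! ### First partial derivatives of F -/

variable (K) in
noncomputable def E0 (w : Fin 5 → ℝ) : ℝ :=
  Real.exp (-2 * w 0) * (-2 * g K (Uf w) (w 3)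
    + g1 K (Uf w) (w 3) * (-(Uf w ^ 2 + Bf w) / Uf w))

variable (K) in
noncomputable def E1 (w : Fin 5 → ℝ) : ℝ :=
  Real.exp (-2 * w 0) * (g1 K (Uf w) (w 3) * ((Uf w ^ 2 - 2 * Bf w) / Uf w))

variable (K) in
noncomputable def E2 (w : Fin 5 → ℝ) : ℝ :=
  Real.exp (-2 * w 0) * (g1 K (Uf w) (w 3) * (w 2 * Af w / Uf w))

variable (K) in
noncomputable def E3 (w : Fin 5 → ℝ) : ℝ :=
  Real.exp (-2 * w 0) * g2 K (Uf w) (w 3)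

section Fderiv

variable {F : (Fin 5 → ℝ) → ℝ}
variable (hF : ∀ v : Fin 5 → ℝ,
      F v = (1 / Real.sqrt ((v 2) ^ 2 * Real.exp (2 * (v 1 - v 0))
                + Real.exp (-2 * (2 * v 0 + v 1)))) *
            Real.exp (-2 * v 0) *
            K (Real.sqrt ((v 2) ^ 2 * Real.exp (2 * (v 1 - v 0))
                + Real.exp (-2 * (2 * v 0 + v 1)))) (v 3))

include hF in
lemma F_eq (w : Fin 5 → ℝ) : F w = Real.exp (-2 * w 0) * g K (Uf w) (w 3) := by
  rw [hF w]
  simp only [g, Uf]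
  ring

include hK hF in
lemma pdF0 : pd5 0 F = E0 K := by
  funext w
  have hfun : (fun t => F (Function.update w 0 t)) =
      fun t => Real.exp (-2 * t) * g K (Uf (Function.update w 0 t)) (w 3) := by
    funext t
    rw [F_eq hF]
    simp
  have hlin : HasDerivAt (fun t : ℝ => -2 * t) (-2) (w 0) := by
    simpa using (hasDerivAt_id (w 0)).const_mul (-2)
  have hexp : HasDerivAt (fun t : ℝ => Real.exp (-2 * t))
      (Real.exp (-2 * w 0) * (-2)) (w 0) := hlin.exp
  have hpos : 0 < Uf (Function.update w 0 (w 0)) := Uf_pos _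
  have hg := hasDerivAt_g_fst hK (w 3) (hasDerivAt_U0 w) (by
    rw [Function.update_eq_self]; exact Uf_pos w)
  simp only [Function.update_eq_self] at hg
  have hD := hexp.mul hg
  rw [pd5, hfun]
  erw [hD.deriv]
  simp only [Function.update_eq_self]
  unfold E0
  ring

include hK hF in
lemma pdF1 : pd5 1 F = E1 K := by
  funext w
  have hfun : (fun t => F (Function.update w 1 t)) =
      fun t => Real.exp (-2 * w 0) * g K (Uf (Function.update w 1 t)) (w 3) := by
    funext t
    rw [F_eq hF]
    simp
  have hg := hasDerivAt_g_fst hK (w 3) (hasDerivAt_U1 w) (by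
    rw [Function.update_eq_self]; exact Uf_pos w)
  simp only [Function.update_eq_self] at hg
  have hD := hg.const_mul (Real.exp (-2 * w 0))
  rw [pd5, hfun]
  rw [hD.deriv]
  unfold E1
  ring

include hK hF in
lemma pdF2 : pd5 2 F = E2 K := by
  funext w
  have hfun : (fun t => F (Function.update w 2 t)) =
      fun t => Real.exp (-2 * w 0) * g K (Uf (Function.update w 2 t)) (w 3) := by
    funext t
    rw [F_eq hF]
    simp
  have hg := hasDerivAt_g_fst hK (w 3) (hasDerivAt_U2 w) (by
    rw [Function.update_eq_self]; exact Uf_pos w)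
  simp only [Function.update_eq_self] at hg
  have hD := hg.const_mul (Real.exp (-2 * w 0))
  rw [pd5, hfun]
  rw [hD.deriv]
  unfold E2
  ring

include hK hF in
lemma pdF3 : pd5 3 F = E3 K := by
  funext w
  have hfun : (fun t => F (Function.update w 3 t)) =
      fun t => Real.exp (-2 * w 0) * g K (Uf w) t := by
    funext t
    rw [F_eq hF]
    simp [Uf_update3]
  have hg := hasDerivAt_g_snd hK (u := Uf w) (t := w 3) (Uf_pos w)
  have hD := hg.const_mul (Real.exp (-2 * w 0))
  rw [pd5, hfun]
  rw [hD.deriv]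
  unfold E3
  ring

include hF in
lemma pdF4 : pd5 4 F = fun _ => 0 := by
  funext w
  have hfun : (fun t => F (Function.update w 4 t)) =
      fun _ => Real.exp (-2 * w 0) * g K (Uf w) (w 3) := by
    funext t
    rw [F_eq hF]
    simp [Uf_update4]
  rw [pd5, hfun, deriv_const]

end Fderiv


/-! ### Second partial derivatives -/

noncomputable def Da (v : Fin 5 → ℝ) : ℝ := -(Uf v ^ 2 + Bf v) / Uf v
noncomputable def Db (v : Fin 5 → ℝ) : ℝ := (Uf v ^ 2 - 2 * Bf v) / Uf v
noncomputable def Dp (v : Fin 5 → ℝ) : ℝ := v 2 * Af v / Uf v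
noncomputable def DDaa (v : Fin 5 → ℝ) : ℝ :=
  -(((-2 * (Uf v ^ 2 + Bf v) - 4 * Bf v) * Uf v - (Uf v ^ 2 + Bf v) * Da v) / Uf v ^ 2)
noncomputable def DDbb (v : Fin 5 → ℝ) : ℝ :=
  ((2 * (Uf v ^ 2 - 2 * Bf v) + 4 * Bf v) * Uf v - (Uf v ^ 2 - 2 * Bf v) * Db v) / Uf v ^ 2
noncomputable def DDab (v : Fin 5 → ℝ) : ℝ :=
  ((2 * Uf v * Da v + 8 * Bf v) * Uf v - (Uf v ^ 2 - 2 * Bf v) * Da v) / Uf v ^ 2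

include hK in
lemma pdE0_0 (v : Fin 5 → ℝ) : pd5 0 (E0 K) v =
    Real.exp (-2 * v 0) * (4 * g K (Uf v) (v 3) - 4 * g1 K (Uf v) (v 3) * Da v
      + g11 K (Uf v) (v 3) * Da v ^ 2 + g1 K (Uf v) (v 3) * DDaa v) := by
  have hne : Uf v ≠ 0 := (Uf_pos v).ne'
  have hne' : Uf (Function.update v 0 (v 0)) ≠ 0 := by
    rw [Function.update_eq_self]; exact hne
  have hpos' : 0 < Uf (Function.update v 0 (v 0)) := by
    rw [Function.update_eq_self]; exact Uf_pos v
  rw [pd5]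
  have hfun : (fun t => E0 K (Function.update v 0 t)) =
      fun t => Real.exp (-2 * t) * (-2 * g K (Uf (Function.update v 0 t)) (v 3)
        + g1 K (Uf (Function.update v 0 t)) (v 3) *
          (-(((Uf (Function.update v 0 t)) ^ 2 + Bf (Function.update v 0 t))
            / Uf (Function.update v 0 t)))) := by
    funext t; simp [E0]; ring
  rw [hfun]
  have hlin : HasDerivAt (fun t : ℝ => -2 * t) (-2) (v 0) := by
    simpa using (hasDerivAt_id (v 0)).const_mul (-2)
  have hexp := hlin.exp
  have hU := hasDerivAt_U0 v
  have hB := hasDerivAt_B0 v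
  have hg := hasDerivAt_g_fst hK (v 3) hU hpos'
  have hg1 := hasDerivAt_g1_fst hK (v 3) hU hpos'
  have hquot := (((hU.pow 2).add hB).div hU hne').neg
  have hD := hexp.mul ((hg.const_mul (-2)).add (hg1.mul hquot))
  erw [hD.deriv]
  simp only [Pi.pow_apply, Pi.sub_apply, Pi.add_apply, Pi.mul_apply, Pi.div_apply, Pi.neg_apply]
  simp only [Function.update_eq_self]
  simp only [Da, DDaa]
  field_simp
  ring

include hK in
lemma pdE1_1 (v : Fin 5 → ℝ) : pd5 1 (E1 K) v =
    Real.exp (-2 * v 0) * (g11 K (Uf v) (v 3) * Db v ^ 2 + g1 K (Uf v) (v 3) * DDbb v) := by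
  have hne : Uf v ≠ 0 := (Uf_pos v).ne'
  have hne' : Uf (Function.update v 1 (v 1)) ≠ 0 := by
    rw [Function.update_eq_self]; exact hne
  have hpos' : 0 < Uf (Function.update v 1 (v 1)) := by
    rw [Function.update_eq_self]; exact Uf_pos v
  rw [pd5]
  have hfun : (fun t => E1 K (Function.update v 1 t)) =
      fun t => Real.exp (-2 * v 0) * (g1 K (Uf (Function.update v 1 t)) (v 3) *
          (((Uf (Function.update v 1 t)) ^ 2 - 2 * Bf (Function.update v 1 t))
            / Uf (Function.update v 1 t))) := by
    funext t; simp [E1]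
  rw [hfun]
  have hU := hasDerivAt_U1 v
  have hB := hasDerivAt_B1 v
  have hg1 := hasDerivAt_g1_fst hK (v 3) hU hpos'
  have hquot := ((hU.pow 2).sub (hB.const_mul 2)).div hU hne'
  have hD := (hg1.mul hquot).const_mul (Real.exp (-2 * v 0))
  erw [hD.deriv]
  simp only [Pi.pow_apply, Pi.sub_apply, Pi.add_apply, Pi.mul_apply, Pi.div_apply, Pi.neg_apply]
  simp only [Function.update_eq_self]
  simp only [Db, DDbb]
  field_simp
  ring

include hK in
lemma pdE1_0 (v : Fin 5 → ℝ) : pd5 0 (E1 K) v =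
    Real.exp (-2 * v 0) * (-2 * g1 K (Uf v) (v 3) * Db v
      + g11 K (Uf v) (v 3) * Da v * Db v + g1 K (Uf v) (v 3) * DDab v) := by
  have hne : Uf v ≠ 0 := (Uf_pos v).ne'
  have hne' : Uf (Function.update v 0 (v 0)) ≠ 0 := by
    rw [Function.update_eq_self]; exact hne
  have hpos' : 0 < Uf (Function.update v 0 (v 0)) := by
    rw [Function.update_eq_self]; exact Uf_pos v
  rw [pd5]
  have hfun : (fun t => E1 K (Function.update v 0 t)) =
      fun t => Real.exp (-2 * t) * (g1 K (Uf (Function.update v 0 t)) (v 3) *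
          (((Uf (Function.update v 0 t)) ^ 2 - 2 * Bf (Function.update v 0 t))
            / Uf (Function.update v 0 t))) := by
    funext t; simp [E1]
  rw [hfun]
  have hlin : HasDerivAt (fun t : ℝ => -2 * t) (-2) (v 0) := by
    simpa using (hasDerivAt_id (v 0)).const_mul (-2)
  have hexp := hlin.exp
  have hU := hasDerivAt_U0 v
  have hB := hasDerivAt_B0 v
  have hg1 := hasDerivAt_g1_fst hK (v 3) hU hpos'
  have hquot := ((hU.pow 2).sub (hB.const_mul 2)).div hU hne'
  have hD := hexp.mul (hg1.mul hquot)
  erw [hD.deriv]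
  simp only [Pi.pow_apply, Pi.sub_apply, Pi.add_apply, Pi.mul_apply, Pi.div_apply, Pi.neg_apply]
  simp only [Function.update_eq_self]
  simp only [Da, Db, DDab]
  field_simp
  ring

include hK in
lemma pdE2_2 (v : Fin 5 → ℝ) : pd5 2 (E2 K) v =
    Real.exp (-2 * v 0) * (g11 K (Uf v) (v 3) * Dp v * Dp v
      + g1 K (Uf v) (v 3) * ((Af v * Uf v - v 2 * Af v * Dp v) / Uf v ^ 2)) := by
  have hne : Uf v ≠ 0 := (Uf_pos v).ne'
  have hne' : Uf (Function.update v 2 (v 2)) ≠ 0 := by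
    rw [Function.update_eq_self]; exact hne
  have hpos' : 0 < Uf (Function.update v 2 (v 2)) := by
    rw [Function.update_eq_self]; exact Uf_pos v
  rw [pd5]
  have hfun : (fun t => E2 K (Function.update v 2 t)) =
      fun t => Real.exp (-2 * v 0) * (g1 K (Uf (Function.update v 2 t)) (v 3) *
          (t * Af v / Uf (Function.update v 2 t))) := by
    funext t; simp [E2, Af_update2]
  rw [hfun]
  have hU := hasDerivAt_U2 v
  have hg1 := hasDerivAt_g1_fst hK (v 3) hU hpos'
  have hnum : HasDerivAt (fun t : ℝ => t * Af v) (1 * Af v) (v 2) :=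
    (hasDerivAt_id (v 2)).mul_const (Af v)
  have hquot := hnum.div hU hne'
  have hD := (hg1.mul hquot).const_mul (Real.exp (-2 * v 0))
  erw [hD.deriv]
  simp only [Pi.pow_apply, Pi.sub_apply, Pi.add_apply, Pi.mul_apply, Pi.div_apply, Pi.neg_apply]
  simp only [Function.update_eq_self]
  simp only [Dp]
  field_simp

include hK in
lemma pdE3_3 (v : Fin 5 → ℝ) : pd5 3 (E3 K) v =
    Real.exp (-2 * v 0) * g22 K (Uf v) (v 3) := by
  rw [pd5]
  have hfun : (fun t => E3 K (Function.update v 3 t)) =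
      fun t => Real.exp (-2 * v 0) * g2 K (Uf v) t := by
    funext t; simp [E3, Uf_update3]
  rw [hfun]
  have hD := (hasDerivAt_g2_snd hK (u := Uf v) (t := v 3) (Uf_pos v)).const_mul
    (Real.exp (-2 * v 0))
  rw [hD.deriv]

lemma pdE3_4 (v : Fin 5 → ℝ) : pd5 4 (E3 K) v = 0 := by
  rw [pd5]
  have hfun : (fun t => E3 K (Function.update v 4 t)) =
      fun _ => Real.exp (-2 * v 0) * g2 K (Uf v) (v 3) := by
    funext t; simp [E3, Uf_update4]
  rw [hfun, deriv_const]

lemma pd_zero4 (v : Fin 5 → ℝ) : pd5 4 (fun _ => (0 : ℝ)) v = 0 := by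
  simp [pd5]

end HEaux

set_option maxHeartbeats 2000000 in
theorem harmonic_eigenfunctions_aux (K : ℝ → ℝ → ℝ)
    (hK : ContDiffOn ℝ 2 (Function.uncurry K) (Set.Ioi (0 : ℝ) ×ˢ (Set.univ : Set ℝ)))
    (hharm : ∀ u ∈ Set.Ioi (0 : ℝ), ∀ q : ℝ,
      iteratedDeriv 2 (fun u' => K u' q) u + iteratedDeriv 2 (fun q' => K u q') q = 0)
    (F : (Fin 5 → ℝ) → ℝ)
    (hF : ∀ v : Fin 5 → ℝ,
      F v = (1 / Real.sqrt ((v 2) ^ 2 * Real.exp (2 * (v 1 - v 0))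
                + Real.exp (-2 * (2 * v 0 + v 1)))) *
            Real.exp (-2 * v 0) *
            K (Real.sqrt ((v 2) ^ 2 * Real.exp (2 * (v 1 - v 0))
                + Real.exp (-2 * (2 * v 0 + v 1)))) (v 3)) :
    ∀ v : Fin 5 → ℝ, laplaceG F v = -F v / 12 := by
  intro v
  have h0 : pd5 0 F = HEaux.E0 K := HEaux.pdF0 hK hF
  have h1 : pd5 1 F = HEaux.E1 K := HEaux.pdF1 hK hF
  have h2 : pd5 2 F = HEaux.E2 K := HEaux.pdF2 hK hF
  have h3 : pd5 3 F = HEaux.E3 K := HEaux.pdF3 hK hF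
  have h4 : pd5 4 F = fun _ => 0 := HEaux.pdF4 hF
  have hg22 := HEaux.g_harm hK hharm (HEaux.Uf_pos v) (v 3)
  have hAne : HEaux.Af v ≠ 0 := by simp only [HEaux.Af]; positivity
  have hc1 : Real.exp (2 * v 1 - 2 * v 0) = HEaux.Af v := by
    simp only [HEaux.Af]; congr 1; ring
  have hc2 : Real.exp (-2 * v 0 - 4 * v 1) = HEaux.Bf v / HEaux.Af v := by
    rw [eq_div_iff hAne]
    simp only [HEaux.Af, HEaux.Bf]
    rw [← Real.exp_add]; congr 1; ring
  have hc3 : Real.exp (-6 * v 1) = HEaux.Bf v / HEaux.Af v ^ 2 := by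
    rw [eq_div_iff (pow_ne_zero 2 hAne)]
    simp only [HEaux.Af, HEaux.Bf]
    rw [sq, ← Real.exp_add, ← Real.exp_add]; congr 1; ring
  have hB : HEaux.Bf v = HEaux.Uf v ^ 2 - (v 2) ^ 2 * HEaux.Af v := by
    have := HEaux.Uf_sq v; linarith
  have hne : HEaux.Uf v ≠ 0 := (HEaux.Uf_pos v).ne'
  simp only [laplaceG, h0, h1, h2, h3, h4]
  rw [HEaux.pdE0_0 hK v, HEaux.pdE1_1 hK v, HEaux.pdE1_0 hK v, HEaux.pdE2_2 hK v,
    HEaux.pdE3_3 hK v, HEaux.pdE3_4 v, HEaux.pd_zero4 v, HEaux.F_eq hF v,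
    hg22, hc1, hc2, hc3]
  simp only [HEaux.E0, HEaux.g, HEaux.g1, HEaux.g11, HEaux.Da, HEaux.Db, HEaux.Dp,
    HEaux.DDaa, HEaux.DDbb, HEaux.DDab]
  rw [hB]
  field_simp
  ring


/-- For a twice continuously differentiable harmonic function `K` on `(0,∞) × ℝ`
(`K_uu + K_qq = 0`), the function `F = (1/u)·e^{−2a}·K(u, q)` with
`u = √(p²e^{2(b−a)} + e^{−2(2a+b)})` satisfies `Δ_g F = −F/12`. -/
theorem harmonic_eigenfunctions (K : ℝ → ℝ → ℝ)
    (hK : ContDiffOn ℝ 2 (Function.uncurry K) (Set.Ioi (0 : ℝ) ×ˢ (Set.univ : Set ℝ)))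
    (hharm : ∀ u ∈ Set.Ioi (0 : ℝ), ∀ q : ℝ,
      iteratedDeriv 2 (fun u' => K u' q) u + iteratedDeriv 2 (fun q' => K u q') q = 0)
    (F : (Fin 5 → ℝ) → ℝ)
    (hF : ∀ v : Fin 5 → ℝ,
      F v = (1 / Real.sqrt ((v 2) ^ 2 * Real.exp (2 * (v 1 - v 0))
                + Real.exp (-2 * (2 * v 0 + v 1)))) *
            Real.exp (-2 * v 0) *
            K (Real.sqrt ((v 2) ^ 2 * Real.exp (2 * (v 1 - v 0))
                + Real.exp (-2 * (2 * v 0 + v 1)))) (v 3)) :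
    ∀ v : Fin 5 → ℝ, laplaceG F v = -F v / 12 :=
  harmonic_eigenfunctions_aux K hK hharm F hF
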